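/- Let Π and Π̂ be the orthogonal projections onto the top-p eigenspaces of symmetric matrices Σ and Σ̂ = Σ + Δ, respectively, where λ_p(Σ) − λ_{p+1}(Σ) =: g > 0 and ‖Δ‖_op < g/2. Then both projections are well defined and the excess risk satisfies 0 ≤ ⟨Σ, Π − Π̂⟩ ≤ (8p(d−p)/g)·‖Δ‖_op², where ⟨X,Y⟩ = tr(XYᵀ). (A quadratic bound in ‖Δ‖_op, consistent with the k^{-1} excess-risk rate.) -/

import Mathlib

open Matrix

/-- Hilbert–Schmidt inner product `⟨X,Y⟩ = tr(XYᵀ)`. -/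
def hsInner {d : ℕ} (X Y : Matrix (Fin d) (Fin d) ℝ) : ℝ := (X * Yᵀ).trace

/-- The operator (spectral) norm of a real matrix. -/
noncomputable def opNorm {d : ℕ} (M : Matrix (Fin d) (Fin d) ℝ) : ℝ :=
  ‖(Matrix.toEuclideanCLM (𝕜 := ℝ) M : EuclideanSpace ℝ (Fin d) →L[ℝ] EuclideanSpace ℝ (Fin d))‖

section Helpers
variable {d : ℕ}

variable {d : ℕ}

lemma dot_self_nonneg (x : Fin d → ℝ) : 0 ≤ x ⬝ᵥ x :=
  Finset.sum_nonneg fun i _ => mul_self_nonneg _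

lemma dot_self_pos {x : Fin d → ℝ} (hx : x ≠ 0) : 0 < x ⬝ᵥ x :=
  lt_of_le_of_ne (dot_self_nonneg x) fun h => hx (dotProduct_self_eq_zero.mp h.symm)

section ortho
variable {u : Fin d → Fin d → ℝ}
  (hu : ∀ i j : Fin d, u i ⬝ᵥ u j = if i = j then (1 : ℝ) else 0)

include hu

lemma UUt : (Matrix.of u) * (Matrix.of u)ᵀ = 1 := by
  ext i j
  simp [Matrix.mul_apply, Matrix.one_apply, ← hu i j, dotProduct]

lemma UtU : (Matrix.of u)ᵀ * (Matrix.of u) = 1 :=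
  mul_eq_one_comm.mp (UUt hu)

lemma parseval (x y : Fin d → ℝ) : ∑ i, (u i ⬝ᵥ x) * (u i ⬝ᵥ y) = x ⬝ᵥ y := by
  have h := UtU hu
  calc ∑ i, (u i ⬝ᵥ x) * (u i ⬝ᵥ y)
      = ((Matrix.of u).mulVec x) ⬝ᵥ ((Matrix.of u).mulVec y) := by
        simp [dotProduct, Matrix.mulVec, Matrix.of_apply]
    _ = x ⬝ᵥ ((Matrix.of u)ᵀ * (Matrix.of u)).mulVec y := by
        rw [Matrix.dotProduct_mulVec, ← Matrix.vecMul_transpose, Matrix.vecMul_vecMul,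
          ← Matrix.dotProduct_mulVec]
    _ = x ⬝ᵥ y := by rw [h, Matrix.one_mulVec]

lemma expansion (x : Fin d → ℝ) : ∑ i, (u i ⬝ᵥ x) • u i = x := by
  funext a
  have := parseval hu x
  -- compute coordinate a
  calc (∑ i, (u i ⬝ᵥ x) • u i) a = ∑ i, (u i ⬝ᵥ x) * u i a := by
        simp [Finset.sum_apply]
    _ = ∑ i, (u i ⬝ᵥ x) * (u i ⬝ᵥ Pi.single a 1) := by
        congr 1; funext i; rw [dotProduct_single]; ring_nf
    _ = x ⬝ᵥ Pi.single a 1 := parseval hu x _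
    _ = x a := by rw [dotProduct_single]; ring
end ortho


lemma quadform {u : Fin d → Fin d → ℝ}
    {M : Matrix (Fin d) (Fin d) ℝ} {μ : Fin d → ℝ}
    (hM : ∀ i, M.mulVec (u i) = μ i • u i) (x : Fin d → ℝ)
    (hexp : ∑ i, (u i ⬝ᵥ x) • u i = x) :
    x ⬝ᵥ M.mulVec x = ∑ i, μ i * (u i ⬝ᵥ x) ^ 2 := by
  have h1 : M.mulVec x = ∑ i, (u i ⬝ᵥ x) • (μ i • u i) := by
    conv_lhs => rw [← hexp]
    have : M.mulVec (∑ i, (u i ⬝ᵥ x) • u i)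
        = M.mulVecLin (∑ i, (u i ⬝ᵥ x) • u i) := rfl
    rw [this, map_sum]
    refine Finset.sum_congr rfl fun i _ => ?_
    show M.mulVec ((u i ⬝ᵥ x) • u i) = _
    rw [Matrix.mulVec_smul, hM]
  rw [h1]
  simp only [dotProduct, Finset.sum_apply, Pi.smul_apply, smul_eq_mul, Finset.mul_sum]
  rw [Finset.sum_comm]
  refine Finset.sum_congr rfl fun i _ => ?_
  have h2 : ∀ a, x a * ((u i ⬝ᵥ x) * (μ i * u i a)) = ((u i ⬝ᵥ x) * μ i) * (u i a * x a) := by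
    intro a; ring
  calc ∑ a, x a * ((u i ⬝ᵥ x) * (μ i * u i a))
      = ((u i ⬝ᵥ x) * μ i) * ∑ a, u i a * x a := by
        rw [Finset.mul_sum]; exact Finset.sum_congr rfl fun a _ => by ring
    _ = μ i * (u i ⬝ᵥ x) ^ 2 := by
        have : ∑ a, u i a * x a = u i ⬝ᵥ x := rfl
        rw [this]; ring


lemma exists_orth {m : ℕ} (hmd : m < d) (c : Fin m → Fin d → ℝ) :
    ∃ x : Fin d → ℝ, x ≠ 0 ∧ ∀ k, c k ⬝ᵥ x = 0 := by
  let f : (Fin d → ℝ) →ₗ[ℝ] (Fin m → ℝ) :=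
    { toFun := fun x k => c k ⬝ᵥ x
      map_add' := by intro x y; funext k; simp [dotProduct_add]
      map_smul' := by intro a x; funext k; simp [dotProduct_smul] }
  by_contra hcon
  push_neg at hcon
  have hinj : Function.Injective f := by
    rw [injective_iff_map_eq_zero]
    intro x hx
    by_contra hx0
    obtain ⟨k, hk⟩ := hcon x hx0
    exact hk (congrFun hx k)
  have := LinearMap.finrank_le_finrank_of_injective hinj
  rw [Module.finrank_fin_fun, Module.finrank_fin_fun] at this
  omega

lemma card_lt_p (p : ℕ) (hpd : p ≤ d) :
    ∑ i : Fin d, (if (i : ℕ) < p then (1 : ℝ) else 0) = p := by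
  rw [Fin.sum_univ_eq_sum_range (fun i => if i < p then (1 : ℝ) else 0)]
  rw [← Finset.sum_filter]
  have : (Finset.range d).filter (· < p) = Finset.range p := by
    ext a; simp [Finset.mem_filter, Finset.mem_range]; omega
  rw [this]
  simp

lemma rearrange (p : ℕ) (hp0 : 0 < p) (hpd : p < d) (μ : Fin d → ℝ) (hmono : Antitone μ)
    (r : Fin d → ℝ) (hr0 : ∀ i, 0 ≤ r i) (hr1 : ∀ i, r i ≤ 1)
    (hsum : ∑ i, r i = p) :
    ∑ i, μ i * r i ≤ (∑ i : Fin d, if (i : ℕ) < p then μ i else 0)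
      - (μ ⟨p - 1, Nat.lt_of_le_of_lt (Nat.sub_le p 1) hpd⟩ - μ ⟨p, hpd⟩)
        * ((p : ℝ) - ∑ i : Fin d, if (i : ℕ) < p then r i else 0) := by
  have key : ∀ i : Fin d, μ i * r i ≤
      (if (i : ℕ) < p then μ i else 0)
      + μ ⟨p - 1, Nat.lt_of_le_of_lt (Nat.sub_le p 1) hpd⟩ * ((if (i : ℕ) < p then r i else 0)
          - (if (i : ℕ) < p then (1:ℝ) else 0))
      + μ ⟨p, hpd⟩ * (r i - (if (i : ℕ) < p then r i else 0)) := by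
    intro i
    by_cases hi : (i : ℕ) < p
    · simp only [hi, if_pos]
      have h1 : μ ⟨p - 1, Nat.lt_of_le_of_lt (Nat.sub_le p 1) hpd⟩ ≤ μ i := hmono (by rw [Fin.le_def]; simp; omega)
      have h2 : r i - 1 ≤ 0 := by linarith [hr1 i]
      nlinarith
    · simp only [hi, if_neg, if_false]
      have h1 : μ i ≤ μ ⟨p, hpd⟩ := hmono (by rw [Fin.le_def]; simp; omega)
      have h2 : 0 ≤ r i := hr0 i
      nlinarith
  have hsum2 := Finset.sum_le_sum (fun i (_ : i ∈ Finset.univ) => key i)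
  calc ∑ i, μ i * r i ≤ _ := hsum2
    _ = (∑ i : Fin d, if (i : ℕ) < p then μ i else 0)
      + μ ⟨p - 1, Nat.lt_of_le_of_lt (Nat.sub_le p 1) hpd⟩ * ((∑ i : Fin d, if (i : ℕ) < p then r i else 0) - (p : ℝ))
      + μ ⟨p, hpd⟩ * ((p : ℝ) - ∑ i : Fin d, if (i : ℕ) < p then r i else 0) := by
        rw [Finset.sum_add_distrib, Finset.sum_add_distrib, ← Finset.mul_sum,
          ← Finset.mul_sum, Finset.sum_sub_distrib, Finset.sum_sub_distrib,
          card_lt_p p (le_of_lt hpd), hsum]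
    _ = _ := by ring


variable {p : ℕ}

lemma hsInner_eq_sum' (X Y : Matrix (Fin d) (Fin d) ℝ) :
    hsInner X Y = ∑ i, ∑ j, X i j * Y i j := by
  simp [hsInner, Matrix.trace, Matrix.diag, Matrix.mul_apply, Matrix.transpose_apply]

lemma hsInner_comm (X Y : Matrix (Fin d) (Fin d) ℝ) : hsInner X Y = hsInner Y X := by
  simp only [hsInner_eq_sum']
  exact Finset.sum_congr rfl fun i _ => Finset.sum_congr rfl fun j _ => mul_comm _ _

lemma hsInner_sub (X Y Z : Matrix (Fin d) (Fin d) ℝ) :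
    hsInner X (Y - Z) = hsInner X Y - hsInner X Z := by
  simp only [hsInner_eq_sum', Matrix.sub_apply, ← Finset.sum_sub_distrib]
  exact Finset.sum_congr rfl fun i _ => Finset.sum_congr rfl fun j _ => by ring

lemma hsInner_add_left (X Y Z : Matrix (Fin d) (Fin d) ℝ) :
    hsInner (X + Y) Z = hsInner X Z + hsInner Y Z := by
  simp only [hsInner_eq_sum', Matrix.add_apply, ← Finset.sum_add_distrib]
  exact Finset.sum_congr rfl fun i _ => Finset.sum_congr rfl fun j _ => by ring

lemma trace_mul_vecMulVec' (M : Matrix (Fin d) (Fin d) ℝ) (a b : Fin d → ℝ) :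
    (M * vecMulVec a b).trace = b ⬝ᵥ M.mulVec a := by
  simp only [Matrix.trace, Matrix.diag, Matrix.mul_apply, vecMulVec_apply, dotProduct,
    Matrix.mulVec, Finset.mul_sum]
  exact Finset.sum_congr rfl fun i _ => Finset.sum_congr rfl fun k _ => by
    simp [mul_comm, mul_left_comm]

lemma hsInner_proj (M : Matrix (Fin d) (Fin d) ℝ) (u : Fin d → Fin d → ℝ) :
    hsInner M (∑ i : Fin d, if (i : ℕ) < p then vecMulVec (u i) (u i) else 0)
      = ∑ i : Fin d, if (i : ℕ) < p then u i ⬝ᵥ M.mulVec (u i) else 0 := by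
  have ht : (∑ i : Fin d, if (i : ℕ) < p then vecMulVec (u i) (u i) else 0)ᵀ
      = ∑ i : Fin d, if (i : ℕ) < p then vecMulVec (u i) (u i) else 0 := by
    rw [Matrix.transpose_sum]
    exact Finset.sum_congr rfl fun i _ => by
      split_ifs
      · ext a b; simp [vecMulVec_apply, mul_comm]
      · exact Matrix.transpose_zero
  rw [hsInner, ht, Finset.mul_sum, Matrix.trace_sum]
  exact Finset.sum_congr rfl fun i _ => by
    split_ifs
    · exact trace_mul_vecMulVec' M (u i) (u i)
    · simp

lemma vecMulVec_mulVec' (a b x : Fin d → ℝ) :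
    (vecMulVec a b).mulVec x = (b ⬝ᵥ x) • a := by
  funext i
  simp only [Matrix.mulVec, vecMulVec_apply, dotProduct, Pi.smul_apply, smul_eq_mul,
    Finset.sum_mul, Finset.mul_sum]
  exact Finset.sum_congr rfl fun k _ => by ring

lemma proj_quad (u : Fin d → Fin d → ℝ) (x : Fin d → ℝ) :
    x ⬝ᵥ (∑ i : Fin d, if (i : ℕ) < p then vecMulVec (u i) (u i) else 0).mulVec x
      = ∑ i : Fin d, if (i : ℕ) < p then (u i ⬝ᵥ x) ^ 2 else 0 := by
  have h1 : (∑ i : Fin d, if (i : ℕ) < p then vecMulVec (u i) (u i) else 0).mulVec x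
      = ∑ i : Fin d, if (i : ℕ) < p then (u i ⬝ᵥ x) • u i else 0 := by
    have hsum : ∀ (f : Fin d → Matrix (Fin d) (Fin d) ℝ),
        (∑ i, f i).mulVec x = ∑ i, (f i).mulVec x := by
      intro f
      funext a
      simp only [Matrix.mulVec, dotProduct, Finset.sum_apply, Matrix.sum_apply,
        Finset.sum_mul]
      rw [Finset.sum_comm]
    rw [hsum]
    exact Finset.sum_congr rfl fun i _ => by
      split_ifs
      · exact vecMulVec_mulVec' (u i) (u i) x
      · simp [Matrix.zero_mulVec]
  rw [h1]
  have h2 : x ⬝ᵥ (∑ i : Fin d, if (i : ℕ) < p then (u i ⬝ᵥ x) • u i else 0)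
      = ∑ i : Fin d, x ⬝ᵥ (if (i : ℕ) < p then (u i ⬝ᵥ x) • u i else 0) := by
    simp [dotProduct, Finset.sum_apply, Finset.mul_sum]
    rw [Finset.sum_comm]
  rw [h2]
  exact Finset.sum_congr rfl fun i _ => by
    split_ifs
    · rw [dotProduct_smul, smul_eq_mul, dotProduct_comm]; ring
    · simp



lemma norm_euclid_sq (y : Fin d → ℝ) :
    ‖((WithLp.equiv 2 (Fin d → ℝ)).symm y : EuclideanSpace ℝ (Fin d))‖ ^ 2 = y ⬝ᵥ y := by
  rw [← real_inner_self_eq_norm_sq]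
  simp [PiLp.inner_apply, dotProduct, RCLike.inner_apply, mul_comm]
  simp only [EuclideanSpace.norm_eq]
  rw [Real.sq_sqrt (by positivity)]
  simp [sq]

lemma mulVec_dot_le (M : Matrix (Fin d) (Fin d) ℝ) (x : Fin d → ℝ) :
    (M.mulVec x) ⬝ᵥ (M.mulVec x) ≤ opNorm M ^ 2 * (x ⬝ᵥ x) := by
  have h1 : (Matrix.toEuclideanCLM (𝕜 := ℝ) M) ((WithLp.equiv 2 (Fin d → ℝ)).symm x)
      = (WithLp.equiv 2 (Fin d → ℝ)).symm (M.mulVec x) := by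
    exact Matrix.toEuclideanCLM_toLp M x
  have h2 := (Matrix.toEuclideanCLM (𝕜 := ℝ) M).le_opNorm
    ((WithLp.equiv 2 (Fin d → ℝ)).symm x)
  rw [h1] at h2
  have h3 := mul_self_le_mul_self (norm_nonneg _) h2
  rw [← pow_two, ← pow_two] at h3
  rw [norm_euclid_sq] at h3
  calc (M.mulVec x) ⬝ᵥ (M.mulVec x)
      ≤ (opNorm M * ‖((WithLp.equiv 2 (Fin d → ℝ)).symm x : EuclideanSpace ℝ (Fin d))‖) ^ 2 := h3
    _ = opNorm M ^ 2 * ‖((WithLp.equiv 2 (Fin d → ℝ)).symm x : EuclideanSpace ℝ (Fin d))‖ ^ 2 := by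
        ring
    _ = opNorm M ^ 2 * (x ⬝ᵥ x) := by rw [norm_euclid_sq]

lemma frob_le (M : Matrix (Fin d) (Fin d) ℝ) :
    ∑ i : Fin d, ∑ j : Fin d, M i j * M i j ≤ d * opNorm M ^ 2 := by
  rw [Finset.sum_comm]
  have hcol : ∀ j : Fin d, ∑ i : Fin d, M i j * M i j ≤ opNorm M ^ 2 := by
    intro j
    have h1 := mulVec_dot_le M (Pi.single j 1)
    have h2 : M.mulVec (Pi.single j 1) = fun i => M i j := by
      funext i; simp [Matrix.mulVec_single]
    have h3 : (Pi.single j 1 : Fin d → ℝ) ⬝ᵥ Pi.single j 1 = 1 := by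
      simp [dotProduct_single]
    rw [h2, h3, mul_one] at h1
    simpa [dotProduct] using h1
  calc ∑ j : Fin d, ∑ i : Fin d, M i j * M i j ≤ ∑ _j : Fin d, opNorm M ^ 2 :=
        Finset.sum_le_sum fun j _ => hcol j
    _ = d * opNorm M ^ 2 := by simp [Finset.sum_const, Finset.card_univ, nsmul_eq_mul]

lemma abs_quad_le (M : Matrix (Fin d) (Fin d) ℝ) (x : Fin d → ℝ) :
    |x ⬝ᵥ M.mulVec x| ≤ opNorm M * (x ⬝ᵥ x) := by
  have hcs : (x ⬝ᵥ M.mulVec x) ^ 2 ≤ (x ⬝ᵥ x) * ((M.mulVec x) ⬝ᵥ (M.mulVec x)) := by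
    have := Finset.sum_mul_sq_le_sq_mul_sq Finset.univ x (M.mulVec x)
    simpa [dotProduct, pow_two] using this
  have h2 := mulVec_dot_le M x
  have hxx : 0 ≤ x ⬝ᵥ x := Finset.sum_nonneg fun i _ => mul_self_nonneg _
  have hop : 0 ≤ opNorm M := norm_nonneg _
  nlinarith [sq_abs (x ⬝ᵥ M.mulVec x), abs_nonneg (x ⬝ᵥ M.mulVec x),
    mul_nonneg hop hxx]

end Helpers

set_option maxHeartbeats 1000000 in
/-- Let `Π`, `Π̂` be the orthogonal projections onto the top-`p` eigenspaces of the
symmetric matrices `Σ` and `Σ̂ = Σ + Δ`, where the eigengap `g = λ_p(Σ) − λ_{p+1}(Σ)` is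
positive and `‖Δ‖_op < g/2`.  Then the top-`p` eigenspace of `Σ̂` is well defined
(`λ̂_p > λ̂_{p+1}`) and the excess risk satisfies
`0 ≤ ⟨Σ, Π − Π̂⟩ ≤ (8 p (d−p)/g)·‖Δ‖_op²`. -/
theorem excess_risk_quadratic_bound {d p : ℕ} (hp0 : 0 < p) (hpd : p < d)
    (Sig Delta : Matrix (Fin d) (Fin d) ℝ)
    (hSig : Sigᵀ = Sig) (hDelta : Deltaᵀ = Delta)
    (lam lamHat : Fin d → ℝ) (hmono : Antitone lam) (hmonoHat : Antitone lamHat)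
    (v w : Fin d → (Fin d → ℝ))
    (h_on_v : ∀ i j : Fin d, v i ⬝ᵥ v j = if i = j then (1 : ℝ) else 0)
    (h_on_w : ∀ i j : Fin d, w i ⬝ᵥ w j = if i = j then (1 : ℝ) else 0)
    (heig : ∀ i, Sig.mulVec (v i) = lam i • v i)
    (heigHat : ∀ i, (Sig + Delta).mulVec (w i) = lamHat i • w i)
    (g : ℝ) (hg : g = lam ⟨p - 1, by omega⟩ - lam ⟨p, hpd⟩) (hgpos : 0 < g)
    (hDeltaSmall : opNorm Delta < g / 2)
    (P PHat : Matrix (Fin d) (Fin d) ℝ)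
    (hP : P = ∑ i : Fin d, if (i : ℕ) < p then vecMulVec (v i) (v i) else 0)
    (hPHat : PHat = ∑ i : Fin d, if (i : ℕ) < p then vecMulVec (w i) (w i) else 0) :
    lamHat ⟨p, hpd⟩ < lamHat ⟨p - 1, by omega⟩ ∧
    0 ≤ hsInner Sig (P - PHat) ∧
    hsInner Sig (P - PHat)
      ≤ 8 * (p : ℝ) * ((d : ℝ) - (p : ℝ)) / g * opNorm Delta ^ 2 := by
  have hop0 : 0 ≤ opNorm Delta := norm_nonneg _
  have expv : ∀ x, ∑ i, (v i ⬝ᵥ x) • v i = x := expansion h_on_v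
  have expw : ∀ x, ∑ i, (w i ⬝ᵥ x) • w i = x := expansion h_on_w
  have pv : ∀ x y, ∑ i, (v i ⬝ᵥ x) * (v i ⬝ᵥ y) = x ⬝ᵥ y := parseval h_on_v
  have pw : ∀ x y, ∑ i, (w i ⬝ᵥ x) * (w i ⬝ᵥ y) = x ⬝ᵥ y := parseval h_on_w
  have qv : ∀ x, x ⬝ᵥ Sig.mulVec x = ∑ i, lam i * (v i ⬝ᵥ x) ^ 2 :=
    fun x => quadform heig x (expv x)
  have qw : ∀ x, x ⬝ᵥ (Sig + Delta).mulVec x = ∑ i, lamHat i * (w i ⬝ᵥ x) ^ 2 :=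
    fun x => quadform heigHat x (expw x)
  have sumsq_v : ∀ x, ∑ i, (v i ⬝ᵥ x) ^ 2 = x ⬝ᵥ x := fun x => by
    rw [← pv x x]; exact Finset.sum_congr rfl fun i _ => pow_two _
  have sumsq_w : ∀ x, ∑ i, (w i ⬝ᵥ x) ^ 2 = x ⬝ᵥ x := fun x => by
    rw [← pw x x]; exact Finset.sum_congr rfl fun i _ => pow_two _
  -- ===================== Weyl inequalities =====================
  have weyl_a : lamHat ⟨p, hpd⟩ ≤ lam ⟨p, hpd⟩ + opNorm Delta := by
    obtain ⟨x, hx0, hxc⟩ := exists_orth (show d - 1 < d by omega)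
      (fun k : Fin (d - 1) =>
        if (k : ℕ) < p then v ⟨(k : ℕ), by omega⟩ else w ⟨(k : ℕ) + 1, by omega⟩)
    have hv0 : ∀ i : Fin d, (i : ℕ) < p → v i ⬝ᵥ x = 0 := by
      intro i hi
      have hk := hxc ⟨(i : ℕ), by omega⟩
      rw [if_pos hi] at hk
      rwa [Fin.eta] at hk
    have hw0 : ∀ j : Fin d, p < (j : ℕ) → w j ⬝ᵥ x = 0 := by
      intro j hj
      have hk := hxc ⟨(j : ℕ) - 1, by omega⟩
      rw [if_neg (show ¬((j : ℕ) - 1 < p) by omega)] at hk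
      have he : (⟨(j : ℕ) - 1 + 1, by omega⟩ : Fin d) = j := by
        apply Fin.ext; simp; omega
      rwa [he] at hk
    have hn : 0 < x ⬝ᵥ x := dot_self_pos hx0
    have hA : x ⬝ᵥ Sig.mulVec x ≤ lam ⟨p, hpd⟩ * (x ⬝ᵥ x) := by
      rw [qv, ← sumsq_v x, Finset.mul_sum]
      refine Finset.sum_le_sum fun i _ => ?_
      by_cases hi : (i : ℕ) < p
      · rw [hv0 i hi]; simp
      · exact mul_le_mul_of_nonneg_right
          (hmono (show (⟨p, hpd⟩ : Fin d) ≤ i by rw [Fin.le_def]; simp; omega))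
          (sq_nonneg _)
    have hB : lamHat ⟨p, hpd⟩ * (x ⬝ᵥ x) ≤ x ⬝ᵥ (Sig + Delta).mulVec x := by
      rw [qw, ← sumsq_w x, Finset.mul_sum]
      refine Finset.sum_le_sum fun j _ => ?_
      by_cases hj : p < (j : ℕ)
      · rw [hw0 j hj]; simp
      · exact mul_le_mul_of_nonneg_right
          (hmonoHat (show j ≤ (⟨p, hpd⟩ : Fin d) by rw [Fin.le_def]; simp; omega))
          (sq_nonneg _)
    have habs := (abs_le.mp (abs_quad_le Delta x)).2
    have hsplit : x ⬝ᵥ (Sig + Delta).mulVec x = x ⬝ᵥ Sig.mulVec x + x ⬝ᵥ Delta.mulVec x := by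
      rw [Matrix.add_mulVec, dotProduct_add]
    nlinarith [hn, hB, hA, habs, hsplit]
  have weyl_b : lam ⟨p - 1, by omega⟩ - opNorm Delta ≤ lamHat ⟨p - 1, by omega⟩ := by
    obtain ⟨x, hx0, hxc⟩ := exists_orth (show d - 1 < d by omega)
      (fun k : Fin (d - 1) =>
        if (k : ℕ) < p - 1 then w ⟨(k : ℕ), by omega⟩ else v ⟨(k : ℕ) + 1, by omega⟩)
    have hw0 : ∀ j : Fin d, (j : ℕ) < p - 1 → w j ⬝ᵥ x = 0 := by
      intro j hj
      have hk := hxc ⟨(j : ℕ), by omega⟩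
      rw [if_pos hj] at hk
      rwa [Fin.eta] at hk
    have hv0 : ∀ i : Fin d, p ≤ (i : ℕ) → v i ⬝ᵥ x = 0 := by
      intro i hi
      have hk := hxc ⟨(i : ℕ) - 1, by omega⟩
      rw [if_neg (show ¬((i : ℕ) - 1 < p - 1) by omega)] at hk
      have he : (⟨(i : ℕ) - 1 + 1, by omega⟩ : Fin d) = i := by
        apply Fin.ext; simp; omega
      rwa [he] at hk
    have hn : 0 < x ⬝ᵥ x := dot_self_pos hx0
    have hA : lam ⟨p - 1, by omega⟩ * (x ⬝ᵥ x) ≤ x ⬝ᵥ Sig.mulVec x := by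
      rw [qv, ← sumsq_v x, Finset.mul_sum]
      refine Finset.sum_le_sum fun i _ => ?_
      by_cases hi : p ≤ (i : ℕ)
      · rw [hv0 i hi]; simp
      · exact mul_le_mul_of_nonneg_right
          (hmono (show i ≤ (⟨p - 1, by omega⟩ : Fin d) by rw [Fin.le_def]; simp; omega))
          (sq_nonneg _)
    have hB : x ⬝ᵥ (Sig + Delta).mulVec x ≤ lamHat ⟨p - 1, by omega⟩ * (x ⬝ᵥ x) := by
      rw [qw, ← sumsq_w x, Finset.mul_sum]
      refine Finset.sum_le_sum fun j _ => ?_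
      by_cases hj : (j : ℕ) < p - 1
      · rw [hw0 j hj]; simp
      · exact mul_le_mul_of_nonneg_right
          (hmonoHat (show (⟨p - 1, by omega⟩ : Fin d) ≤ j by rw [Fin.le_def]; simp; omega))
          (sq_nonneg _)
    have habs := (abs_le.mp (abs_quad_le Delta x)).1
    have hsplit : x ⬝ᵥ (Sig + Delta).mulVec x = x ⬝ᵥ Sig.mulVec x + x ⬝ᵥ Delta.mulVec x := by
      rw [Matrix.add_mulVec, dotProduct_add]
    nlinarith [hn, hB, hA, habs, hsplit]
  have part1 : lamHat ⟨p, hpd⟩ < lamHat ⟨p - 1, by omega⟩ := by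
    have h1 := hDeltaSmall
    rw [hg] at h1
    linarith [weyl_a, weyl_b]
  -- ===================== excess risk =====================
  set s : Fin d → ℝ := fun i => ∑ j : Fin d, if (j : ℕ) < p then (v i ⬝ᵥ w j) ^ 2 else 0
    with hsdef
  set sh : Fin d → ℝ := fun j => ∑ i : Fin d, if (i : ℕ) < p then (w j ⬝ᵥ v i) ^ 2 else 0
    with hshdef
  have hs0 : ∀ i, 0 ≤ s i := fun i => Finset.sum_nonneg fun j _ => by
    split_ifs; exacts [sq_nonneg _, le_refl 0]
  have hsh0 : ∀ j, 0 ≤ sh j := fun j => Finset.sum_nonneg fun i _ => by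
    split_ifs; exacts [sq_nonneg _, le_refl 0]
  have hs1 : ∀ i, s i ≤ 1 := by
    intro i
    have hle : s i ≤ ∑ j : Fin d, (v i ⬝ᵥ w j) ^ 2 := Finset.sum_le_sum fun j _ => by
      split_ifs; exacts [le_refl _, sq_nonneg _]
    have h3 : ∑ j, (w j ⬝ᵥ v i) * (w j ⬝ᵥ v i) = v i ⬝ᵥ v i := pw (v i) (v i)
    rw [h_on_v i i, if_pos rfl] at h3
    have h4 : ∑ j : Fin d, (v i ⬝ᵥ w j) ^ 2 = 1 := by
      rw [← h3]; exact Finset.sum_congr rfl fun j _ => by rw [pow_two, dotProduct_comm]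
    linarith
  have hsh1 : ∀ j, sh j ≤ 1 := by
    intro j
    have hle : sh j ≤ ∑ i : Fin d, (w j ⬝ᵥ v i) ^ 2 := Finset.sum_le_sum fun i _ => by
      split_ifs; exacts [le_refl _, sq_nonneg _]
    have h3 : ∑ i, (v i ⬝ᵥ w j) * (v i ⬝ᵥ w j) = w j ⬝ᵥ w j := pv (w j) (w j)
    rw [h_on_w j j, if_pos rfl] at h3
    have h4 : ∑ i : Fin d, (w j ⬝ᵥ v i) ^ 2 = 1 := by
      rw [← h3]; exact Finset.sum_congr rfl fun i _ => by rw [pow_two, dotProduct_comm]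
    linarith
  have hssum : ∑ i, s i = (p : ℝ) := by
    simp only [hsdef]
    rw [Finset.sum_comm]
    calc ∑ j : Fin d, ∑ i : Fin d, (if (j : ℕ) < p then (v i ⬝ᵥ w j) ^ 2 else 0)
        = ∑ j : Fin d, (if (j : ℕ) < p then (1 : ℝ) else 0) := by
          refine Finset.sum_congr rfl fun j _ => ?_
          split_ifs with h
          · have h3 := pv (w j) (w j)
            rw [h_on_w j j, if_pos rfl] at h3
            rw [← h3]; exact Finset.sum_congr rfl fun i _ => pow_two _
          · simp
      _ = (p : ℝ) := card_lt_p p (le_of_lt hpd)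
  have hshsum : ∑ j, sh j = (p : ℝ) := by
    simp only [hshdef]
    rw [Finset.sum_comm]
    calc ∑ i : Fin d, ∑ j : Fin d, (if (i : ℕ) < p then (w j ⬝ᵥ v i) ^ 2 else 0)
        = ∑ i : Fin d, (if (i : ℕ) < p then (1 : ℝ) else 0) := by
          refine Finset.sum_congr rfl fun i _ => ?_
          split_ifs with h
          · have h3 := pw (v i) (v i)
            rw [h_on_v i i, if_pos rfl] at h3
            rw [← h3]; exact Finset.sum_congr rfl fun j _ => pow_two _
          · simp
      _ = (p : ℝ) := card_lt_p p (le_of_lt hpd)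
  -- hsInner computations
  have hP_hs : hsInner Sig P = ∑ i : Fin d, if (i : ℕ) < p then lam i else 0 := by
    rw [hP, hsInner_proj]
    refine Finset.sum_congr rfl fun i _ => ?_
    split_ifs with h
    · rw [heig i, dotProduct_smul, smul_eq_mul, h_on_v i i, if_pos rfl, mul_one]
    · rfl
  have hPhat_hs2 : hsInner (Sig + Delta) PHat
      = ∑ j : Fin d, if (j : ℕ) < p then lamHat j else 0 := by
    rw [hPHat, hsInner_proj]
    refine Finset.sum_congr rfl fun j _ => ?_
    split_ifs with h
    · rw [heigHat j, dotProduct_smul, smul_eq_mul, h_on_w j j, if_pos rfl, mul_one]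
    · rfl
  have hPHat_hs : hsInner Sig PHat = ∑ i : Fin d, lam i * s i := by
    rw [hPHat, hsInner_proj]
    calc ∑ j : Fin d, (if (j : ℕ) < p then w j ⬝ᵥ Sig.mulVec (w j) else 0)
        = ∑ j : Fin d, ∑ i : Fin d, (if (j : ℕ) < p then lam i * (v i ⬝ᵥ w j) ^ 2 else 0) := by
          refine Finset.sum_congr rfl fun j _ => ?_
          split_ifs with h
          · exact qv (w j)
          · simp
      _ = ∑ i : Fin d, ∑ j : Fin d, (if (j : ℕ) < p then lam i * (v i ⬝ᵥ w j) ^ 2 else 0) :=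
          Finset.sum_comm
      _ = ∑ i : Fin d, lam i * s i := by
          refine Finset.sum_congr rfl fun i _ => ?_
          simp only [hsdef]
          rw [Finset.mul_sum]
          exact Finset.sum_congr rfl fun j _ => by split_ifs <;> simp
  have hP_hs2 : hsInner (Sig + Delta) P = ∑ j : Fin d, lamHat j * sh j := by
    rw [hP, hsInner_proj]
    calc ∑ i : Fin d, (if (i : ℕ) < p then v i ⬝ᵥ (Sig + Delta).mulVec (v i) else 0)
        = ∑ i : Fin d, ∑ j : Fin d, (if (i : ℕ) < p then lamHat j * (w j ⬝ᵥ v i) ^ 2 else 0) := by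
          refine Finset.sum_congr rfl fun i _ => ?_
          split_ifs with h
          · exact qw (v i)
          · simp
      _ = ∑ j : Fin d, ∑ i : Fin d, (if (i : ℕ) < p then lamHat j * (w j ⬝ᵥ v i) ^ 2 else 0) :=
          Finset.sum_comm
      _ = ∑ j : Fin d, lamHat j * sh j := by
          refine Finset.sum_congr rfl fun j _ => ?_
          simp only [hshdef]
          rw [Finset.mul_sum]
          exact Finset.sum_congr rfl fun i _ => by split_ifs <;> simp
  -- lower bound via rearrangement
  have hSle : (∑ i : Fin d, if (i : ℕ) < p then s i else 0) ≤ (p : ℝ) := by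
    calc (∑ i : Fin d, if (i : ℕ) < p then s i else 0)
        ≤ ∑ i : Fin d, (if (i : ℕ) < p then (1 : ℝ) else 0) :=
          Finset.sum_le_sum fun i _ => by split_ifs; exacts [hs1 i, le_refl 0]
      _ = (p : ℝ) := card_lt_p p (le_of_lt hpd)
  have hShle : (∑ j : Fin d, if (j : ℕ) < p then sh j else 0) ≤ (p : ℝ) := by
    calc (∑ j : Fin d, if (j : ℕ) < p then sh j else 0)
        ≤ ∑ j : Fin d, (if (j : ℕ) < p then (1 : ℝ) else 0) :=
          Finset.sum_le_sum fun j _ => by split_ifs; exacts [hsh1 j, le_refl 0]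
      _ = (p : ℝ) := card_lt_p p (le_of_lt hpd)
  have hre := rearrange p hp0 hpd lam hmono s hs0 hs1 hssum
  have hre2 := rearrange p hp0 hpd lamHat hmonoHat sh hsh0 hsh1 hshsum
  have hEeq : hsInner Sig (P - PHat)
      = (∑ i : Fin d, if (i : ℕ) < p then lam i else 0) - ∑ i : Fin d, lam i * s i := by
    rw [hsInner_sub, hP_hs, hPHat_hs]
  have hgS : g * ((p : ℝ) - ∑ i : Fin d, if (i : ℕ) < p then s i else 0)
      ≤ hsInner Sig (P - PHat) := by
    rw [hEeq, hg]; linarith [hre]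
  have part2 : 0 ≤ hsInner Sig (P - PHat) :=
    le_trans (mul_nonneg hgpos.le (by linarith [hSle])) hgS
  -- upper bound
  have hgapHat : 0 ≤ lamHat ⟨p - 1, by omega⟩ - lamHat ⟨p, hpd⟩ :=
    sub_nonneg.mpr (hmonoHat (show (⟨p - 1, by omega⟩ : Fin d) ≤ ⟨p, hpd⟩ from Fin.mk_le_mk.mpr (by omega)))
  have hup : hsInner (Sig + Delta) P ≤ hsInner (Sig + Delta) PHat := by
    rw [hP_hs2, hPhat_hs2]
    nlinarith [hre2, hgapHat, hShle]
  have hEa : hsInner Sig (P - PHat) ≤ -(hsInner Delta (P - PHat)) := by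
    have h1 : hsInner (Sig + Delta) (P - PHat) ≤ 0 := by
      rw [hsInner_sub]; linarith [hup, (hsInner_sub (Sig + Delta) P PHat)]
    have h2 := hsInner_add_left Sig Delta (P - PHat)
    linarith [h1, h2]
  have hF0 : 0 ≤ hsInner Delta Delta := by
    rw [hsInner_eq_sum']
    exact Finset.sum_nonneg fun i _ => Finset.sum_nonneg fun j _ => mul_self_nonneg _
  have hcs : (hsInner Delta (P - PHat)) ^ 2
      ≤ hsInner Delta Delta * hsInner (P - PHat) (P - PHat) := by
    rw [hsInner_eq_sum' Delta (P - PHat), hsInner_eq_sum' Delta Delta,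
      hsInner_eq_sum' (P - PHat) (P - PHat)]
    rw [← Finset.sum_product' (f := fun i j => Delta i j * (P - PHat) i j),
      ← Finset.sum_product' (f := fun i j => Delta i j * Delta i j),
      ← Finset.sum_product' (f := fun i j => (P - PHat) i j * (P - PHat) i j)]
    have := Finset.sum_mul_sq_le_sq_mul_sq (Finset.univ ×ˢ Finset.univ)
      (fun x : Fin d × Fin d => Delta x.1 x.2) (fun x : Fin d × Fin d => (P - PHat) x.1 x.2)
    simpa [pow_two] using this
  have hfrob : hsInner Delta Delta ≤ (d : ℝ) * opNorm Delta ^ 2 := by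
    rw [hsInner_eq_sum']; exact frob_le Delta
  -- ‖P - PHat‖_F² = 2 (p - S)
  have hsPP : hsInner P P = (p : ℝ) := by
    rw [hP, hsInner_proj]
    calc ∑ i : Fin d, (if (i : ℕ) < p then
          v i ⬝ᵥ (∑ k : Fin d, if (k : ℕ) < p then vecMulVec (v k) (v k) else 0).mulVec (v i)
          else 0)
        = ∑ i : Fin d, (if (i : ℕ) < p then (1 : ℝ) else 0) := by
          refine Finset.sum_congr rfl fun i _ => ?_
          split_ifs with hi
          · rw [proj_quad]
            have hterm : ∀ k : Fin d, (if (k : ℕ) < p then (v k ⬝ᵥ v i) ^ 2 else 0)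
                = if k = i then (1 : ℝ) else 0 := by
              intro k
              rcases eq_or_ne k i with rfl | hk
              · simp [h_on_v k k, hi]
              · simp [h_on_v k i, hk]
            rw [Finset.sum_congr rfl fun k _ => hterm k]
            simp
          · rfl
      _ = (p : ℝ) := card_lt_p p (le_of_lt hpd)
  have hsQQ : hsInner PHat PHat = (p : ℝ) := by
    rw [hPHat, hsInner_proj]
    calc ∑ j : Fin d, (if (j : ℕ) < p then
          w j ⬝ᵥ (∑ k : Fin d, if (k : ℕ) < p then vecMulVec (w k) (w k) else 0).mulVec (w j)
          else 0)
        = ∑ j : Fin d, (if (j : ℕ) < p then (1 : ℝ) else 0) := by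
          refine Finset.sum_congr rfl fun j _ => ?_
          split_ifs with hj
          · rw [proj_quad]
            have hterm : ∀ k : Fin d, (if (k : ℕ) < p then (w k ⬝ᵥ w j) ^ 2 else 0)
                = if k = j then (1 : ℝ) else 0 := by
              intro k
              rcases eq_or_ne k j with rfl | hk
              · simp [h_on_w k k, hj]
              · simp [h_on_w k j, hk]
            rw [Finset.sum_congr rfl fun k _ => hterm k]
            simp
          · rfl
      _ = (p : ℝ) := card_lt_p p (le_of_lt hpd)
  have hsPQ : hsInner P PHat = ∑ i : Fin d, if (i : ℕ) < p then s i else 0 := by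
    rw [hPHat, hsInner_proj]
    calc ∑ j : Fin d, (if (j : ℕ) < p then w j ⬝ᵥ P.mulVec (w j) else 0)
        = ∑ j : Fin d, ∑ i : Fin d,
            (if (j : ℕ) < p then (if (i : ℕ) < p then (v i ⬝ᵥ w j) ^ 2 else 0) else 0) := by
          refine Finset.sum_congr rfl fun j _ => ?_
          split_ifs with hj
          · rw [hP, proj_quad]
          · simp
      _ = ∑ i : Fin d, ∑ j : Fin d,
            (if (i : ℕ) < p then (if (j : ℕ) < p then (v i ⬝ᵥ w j) ^ 2 else 0) else 0) := by
          rw [Finset.sum_comm]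
          refine Finset.sum_congr rfl fun i _ => Finset.sum_congr rfl fun j _ => ?_
          split_ifs <;> rfl
      _ = ∑ i : Fin d, (if (i : ℕ) < p then s i else 0) := by
          refine Finset.sum_congr rfl fun i _ => ?_
          simp only [hsdef]
          split_ifs with hi
          · rfl
          · simp
  have hPPnorm : hsInner (P - PHat) (P - PHat)
      = 2 * ((p : ℝ) - ∑ i : Fin d, if (i : ℕ) < p then s i else 0) := by
    have e1 := hsInner_sub (P - PHat) P PHat
    have e2 := hsInner_comm (P - PHat) P
    have e3 := hsInner_comm (P - PHat) PHat
    have e4 := hsInner_sub P P PHat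
    have e5 := hsInner_sub PHat P PHat
    have e6 := hsInner_comm PHat P
    linarith [e1, e2, e3, e4, e5, e6, hsPP, hsQQ, hsPQ.le, hsPQ.ge]
  -- final numeric assembly
  refine ⟨part1, part2, ?_⟩
  have hp1 : (1 : ℝ) ≤ (p : ℝ) := by exact_mod_cast hp0
  have hd1 : (p : ℝ) + 1 ≤ (d : ℝ) := by exact_mod_cast hpd
  have hdp : 2 * (d : ℝ) ≤ 8 * (p : ℝ) * ((d : ℝ) - (p : ℝ)) := by
    have ha : (0 : ℝ) ≤ (p : ℝ) - 1 := by linarith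
    have hb : (0 : ℝ) ≤ (d : ℝ) - (p : ℝ) - 1 := by linarith
    nlinarith [mul_nonneg ha hb]
  have hT0 : 0 ≤ (p : ℝ) - ∑ i : Fin d, if (i : ℕ) < p then s i else 0 := by linarith [hSle]
  have h1 : hsInner Sig (P - PHat) ^ 2 ≤ (hsInner Delta (P - PHat)) ^ 2 := by
    nlinarith [hEa, part2]
  have h2 : (hsInner Delta (P - PHat)) ^ 2 ≤ ((d : ℝ) * opNorm Delta ^ 2)
      * (2 * ((p : ℝ) - ∑ i : Fin d, if (i : ℕ) < p then s i else 0)) := by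
    calc (hsInner Delta (P - PHat)) ^ 2
        ≤ hsInner Delta Delta * hsInner (P - PHat) (P - PHat) := hcs
      _ = hsInner Delta Delta
          * (2 * ((p : ℝ) - ∑ i : Fin d, if (i : ℕ) < p then s i else 0)) := by rw [hPPnorm]
      _ ≤ _ := mul_le_mul_of_nonneg_right hfrob (by linarith)
  have h3 := le_trans h1 h2
  have h4 := hgS
  rw [div_mul_eq_mul_div, le_div_iff₀ hgpos]
  rcases eq_or_lt_of_le part2 with hE0 | hEpos
  · rw [← hE0, zero_mul]
    have h8 : (0 : ℝ) ≤ 8 * (p : ℝ) * ((d : ℝ) - (p : ℝ)) :=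
      le_trans (by positivity) hdp
    exact mul_nonneg h8 (sq_nonneg _)
  · have h5 : g * hsInner Sig (P - PHat) ^ 2 ≤ g * (((d : ℝ) * opNorm Delta ^ 2)
        * (2 * ((p : ℝ) - ∑ i : Fin d, if (i : ℕ) < p then s i else 0))) :=
      mul_le_mul_of_nonneg_left h3 hgpos.le
    have hnn : (0 : ℝ) ≤ 2 * (d : ℝ) * opNorm Delta ^ 2 := by positivity
    have h6 := mul_le_mul_of_nonneg_left h4 hnn
    have key : g * hsInner Sig (P - PHat) ^ 2
        ≤ 2 * (d : ℝ) * opNorm Delta ^ 2 * hsInner Sig (P - PHat) := by linarith [h5, h6]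
    have key2 : g * hsInner Sig (P - PHat) ≤ 2 * (d : ℝ) * opNorm Delta ^ 2 := by
      by_contra hcon
      push_neg at hcon
      have h8 := mul_lt_mul_of_pos_right hcon hEpos
      linarith [key, h8]
    have h7 : 0 ≤ (8 * (p : ℝ) * ((d : ℝ) - (p : ℝ)) - 2 * (d : ℝ)) * opNorm Delta ^ 2 :=
      mul_nonneg (by linarith) (sq_nonneg _)
    linarith [key2, h7]
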